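/- Let a = (a₁, 1/2) and b = (b₁, b₂) with a₁, b₁, b₂ ∈ {0, 1/2}. Then Θ_{(a,b)}(τ) tends to 0 uniformly as the lower-right entry of Im τ tends to infinity over Minkowski-reduced matrices: for every ε > 0 there exists T > 0 such that for every τ ∈ H₂ whose imaginary part Y = [[y₁, y₂],[y₂, y₄]] satisfies 2|y₂| ≤ y₁ ≤ y₄, y₁ ≥ √3/2, and y₄ ≥ T, one has |Θ_{(a,b)}(τ)| < ε. (This expresses that, in the fundamental domain, the theta constants with second coordinate of a equal to 1/2 tend to 0 as one approaches the boundary of the Satake compactification.) -/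

import Mathlib

open scoped BigOperators
open Complex Matrix

noncomputable section

/-- `τ` belongs to the Siegel upper half-space of degree 2: it is a symmetric
`2 × 2` complex matrix whose imaginary part is positive definite. -/
def IsSiegel (τ : Matrix (Fin 2) (Fin 2) ℂ) : Prop :=
  τ.IsSymm ∧ (Matrix.of fun i j => (τ i j).im).PosDef

/-- The term of index `n ∈ ℤ²` of the theta series with characteristic `(a, b)`. -/
def thetaTerm (a b : Fin 2 → ℝ) (τ : Matrix (Fin 2) (Fin 2) ℂ) (n : Fin 2 → ℤ) : ℂ :=
  Complex.exp (2 * Real.pi * Complex.I *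
      (∑ i, ∑ j, ((n i : ℂ) + (a i : ℂ)) * τ i j * ((n j : ℂ) + (a j : ℂ)))
    + 2 * Real.pi * Complex.I * (∑ i, (n i : ℂ) * (b i : ℂ)))

/-- The theta constant `Θ_{(a,b)}(τ)`. -/
def Theta (a b : Fin 2 → ℝ) (τ : Matrix (Fin 2) (Fin 2) ℂ) : ℂ :=
  ∑' n : Fin 2 → ℤ, thetaTerm a b τ n

/-- `(a, b)` is a half-integer characteristic when all entries lie in `{0, 1/2}`. -/
def IsHalf (a : Fin 2 → ℝ) : Prop := ∀ i, a i = 0 ∨ a i = 1 / 2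

lemma norm_thetaTerm (a b : Fin 2 → ℝ) (τ : Matrix (Fin 2) (Fin 2) ℂ) (n : Fin 2 → ℤ) :
    ‖thetaTerm a b τ n‖ = Real.exp (-(2 * Real.pi) *
      (∑ i, ∑ j, ((n i : ℝ) + a i) * (τ i j).im * ((n j : ℝ) + a j))) := by
  rw [thetaTerm, Complex.norm_exp]
  congr 1
  simp [Fin.sum_univ_two, Complex.add_re, Complex.mul_re, Complex.mul_im]

lemma summable_shift {c : ℝ} (hc : 0 < c) {d : ℝ} (hd : 0 ≤ d) :
    Summable (fun m : ℤ => Real.exp (-c * ((m : ℝ) + d) ^ 2)) := by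
  have h := summable_pow_mul_jacobiTheta₂_term_bound (c * d / Real.pi)
    (div_pos hc Real.pi_pos) 0
  simp only [pow_zero, one_mul] at h
  refine h.of_nonneg_of_le (fun m => (Real.exp_pos _).le) (fun m => ?_)
  rw [Real.exp_le_exp, Int.cast_abs]
  have hpi : (Real.pi : ℝ) ≠ 0 := Real.pi_ne_zero
  have : -Real.pi * (c / Real.pi * (m : ℝ) ^ 2 - 2 * (c * d / Real.pi) * |(m : ℝ)|)
      = -c * (m : ℝ) ^ 2 + 2 * c * d * |(m : ℝ)| := by field_simp; ring
  rw [this]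
  nlinarith [neg_abs_le (m : ℝ), abs_nonneg (m : ℝ), mul_nonneg hc.le hd, sq_nonneg (d : ℝ),
    mul_nonneg (mul_nonneg hc.le hd) hd]

lemma quad_bound (s y1 y2 y4 x1 x2 : ℝ) (hs3 : 0 < s) (h2 : 2 * |y2| ≤ y1)
    (h14 : y1 ≤ y4) (hsq : s / 2 ≤ y1) (hx2 : (1 : ℝ) / 4 ≤ x2 ^ 2)
    (habs : -(y1 * (|x1| * |x2|)) ≤ 2 * (y2 * x1 * x2)) :
    s / 8 * x1 ^ 2 + s / 8 * x2 ^ 2 + y4 / 16 ≤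
      x1 * y1 * x1 + x1 * y2 * x2 + (x2 * y2 * x1 + x2 * y4 * x2) := by
  have hy1 : 0 < y1 := lt_of_lt_of_le (by linarith) hsq
  have e1 : (y1 / 2) * x1 ^ 2 ≤ y1 * x1 ^ 2 - y1 * (|x1| * |x2|) + (y1 / 2) * x2 ^ 2 := by
    nlinarith [mul_nonneg hy1.le (sq_nonneg (|x1| - |x2|)), _root_.sq_abs x1, _root_.sq_abs x2]
  have e2 : (s / 8) * x1 ^ 2 ≤ (y1 / 2) * x1 ^ 2 :=
    mul_le_mul_of_nonneg_right (by linarith) (sq_nonneg x1)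
  have h4s : s / 2 ≤ y4 := le_trans hsq h14
  have e3 : (s / 8) * x2 ^ 2 + y4 / 16 ≤ (y4 - y1 / 2) * x2 ^ 2 := by
    nlinarith [mul_nonneg (show (0:ℝ) ≤ y4 / 4 - s / 8 by linarith) (sq_nonneg x2),
      mul_le_mul_of_nonneg_left hx2 (show (0:ℝ) ≤ y4 / 4 by linarith),
      mul_nonneg (show (0:ℝ) ≤ y4 / 2 - y1 / 2 by linarith) (sq_nonneg x2)]
  nlinarith [habs, e1, e2, e3]

lemma half_sq_ge (m : ℤ) : (1 : ℝ) / 4 ≤ ((m : ℝ) + 1 / 2) ^ 2 := by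
  have h0 : 2 * m + 1 ≠ 0 := by omega
  have h1 : (1 : ℤ) ≤ |2 * m + 1| := Int.one_le_abs h0
  have h2 : (1 : ℤ) ≤ (2 * m + 1) ^ 2 := by nlinarith [_root_.sq_abs (2 * m + 1)]
  have h2' : (1 : ℝ) ≤ ((2 * m + 1 : ℤ) : ℝ) ^ 2 := by exact_mod_cast h2
  push_cast at h2'
  nlinarith

set_option maxHeartbeats 1000000 in
/-- A half-integer theta constant whose characteristic has second `a`-coordinate
equal to `1/2` tends to `0` uniformly on Minkowski-reduced matrices as the
lower-right entry of the imaginary part tends to infinity. -/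
theorem theta_tendsto_zero_boundary (a₁ b₁ b₂ : ℝ)
    (ha₁ : a₁ = 0 ∨ a₁ = 1 / 2) (hb₁ : b₁ = 0 ∨ b₁ = 1 / 2) (hb₂ : b₂ = 0 ∨ b₂ = 1 / 2) :
    ∀ ε > 0, ∃ T > 0, ∀ τ : Matrix (Fin 2) (Fin 2) ℂ, IsSiegel τ →
      2 * |(τ 0 1).im| ≤ (τ 0 0).im →
      (τ 0 0).im ≤ (τ 1 1).im →
      Real.sqrt 3 / 2 ≤ (τ 0 0).im →
      T ≤ (τ 1 1).im →
      ‖Theta ![a₁, 1 / 2] ![b₁, b₂] τ‖ < ε := by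
  intro ε hε
  have hs3 : (0 : ℝ) < Real.sqrt 3 := Real.sqrt_pos.mpr (by norm_num)
  set s : ℝ := Real.sqrt 3 with hs
  have ha₁0 : 0 ≤ a₁ := by rcases ha₁ with h | h <;> rw [h] <;> norm_num
  set c : ℝ := 2 * Real.pi * (s / 8) with hcdef
  have hcpos : 0 < c := by positivity
  set f : ℤ → ℝ := fun m => Real.exp (-c * ((m : ℝ) + a₁) ^ 2) with hfdef
  set g : ℤ → ℝ := fun m => Real.exp (-c * ((m : ℝ) + 1 / 2) ^ 2) with hgdef
  have hf : Summable f := summable_shift hcpos ha₁0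
  have hg : Summable g := summable_shift hcpos (by norm_num)
  have hprod : Summable (fun p : ℤ × ℤ => f p.1 * g p.2) :=
    hf.mul_of_nonneg hg (fun _ => (Real.exp_pos _).le) (fun _ => (Real.exp_pos _).le)
  have hfg : Summable (fun n : Fin 2 → ℤ => f (n 0) * g (n 1)) := by
    have := ((finTwoArrowEquiv ℤ).summable_iff.mpr hprod)
    simpa [Function.comp_def] using this
  set K : ℝ := ∑' n : Fin 2 → ℤ, f (n 0) * g (n 1) with hKdef
  have hK0 : 0 ≤ K := tsum_nonneg (fun n => mul_nonneg (Real.exp_pos _).le (Real.exp_pos _).le)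
  set T : ℝ := max 1 (8 / Real.pi * Real.log ((K + 1) / ε) + 1) with hTdef
  refine ⟨T, lt_of_lt_of_le one_pos (le_max_left _ _), ?_⟩
  intro τ hsg h2 h14 hsq hT4
  have hsym : (τ 1 0).im = (τ 0 1).im := by
    have h := congrFun (congrFun hsg.1 0) 1
    rw [Matrix.transpose_apply] at h
    rw [h]
  set y1 := (τ 0 0).im
  set y2 := (τ 0 1).im
  set y4 := (τ 1 1).im
  have hy1 : 0 < y1 := lt_of_lt_of_le (by positivity) hsq
  have hy4 : 0 < y4 := lt_of_lt_of_le hy1 h14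
  -- key termwise bound
  have key : ∀ n : Fin 2 → ℤ, ‖thetaTerm ![a₁, 1 / 2] ![b₁, b₂] τ n‖ ≤
      Real.exp (-(Real.pi * y4 / 8)) * (f (n 0) * g (n 1)) := by
    intro n
    rw [norm_thetaTerm, hfdef, hgdef]
    simp only []
    rw [← Real.exp_add, ← Real.exp_add, Real.exp_le_exp]
    simp only [Fin.sum_univ_two, Matrix.cons_val_zero, Matrix.cons_val_one, Matrix.head_cons]
    set x1 : ℝ := (n 0 : ℝ) + a₁ with hx1def
    set x2 : ℝ := (n 1 : ℝ) + 1 / 2 with hx2def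
    rw [hsym]
    have hx2 : (1 : ℝ) / 4 ≤ x2 ^ 2 := half_sq_ge (n 1)
    have habs : -(y1 * (|x1| * |x2|)) ≤ 2 * (y2 * x1 * x2) := by
      have h1 : |2 * (y2 * x1 * x2)| ≤ y1 * (|x1| * |x2|) := by
        rw [abs_mul, abs_mul, abs_mul]
        rw [_root_.abs_two]
        calc 2 * (|y2| * |x1| * |x2|) = (2 * |y2|) * (|x1| * |x2|) := by ring
          _ ≤ y1 * (|x1| * |x2|) := by
              apply mul_le_mul_of_nonneg_right h2 (mul_nonneg (abs_nonneg _) (abs_nonneg _))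
      linarith [neg_abs_le (2 * (y2 * x1 * x2))]
    have hQ : s / 8 * x1 ^ 2 + s / 8 * x2 ^ 2 + y4 / 16 ≤
        x1 * y1 * x1 + x1 * y2 * x2 + (x2 * y2 * x1 + x2 * y4 * x2) :=
      quad_bound s y1 y2 y4 x1 x2 hs3 h2 h14 hsq hx2 habs
    have hpi : (0 : ℝ) < Real.pi := Real.pi_pos
    rw [hcdef]
    have h2pi := mul_le_mul_of_nonneg_left hQ (by positivity : (0:ℝ) ≤ 2 * Real.pi)
    linarith
  have hCfg : Summable (fun n : Fin 2 → ℤ =>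
      Real.exp (-(Real.pi * y4 / 8)) * (f (n 0) * g (n 1))) := hfg.mul_left _
  have hsumnorm : Summable (fun n : Fin 2 → ℤ => ‖thetaTerm ![a₁, 1 / 2] ![b₁, b₂] τ n‖) :=
    hCfg.of_nonneg_of_le (fun n => norm_nonneg _) key
  have hbound : ‖Theta ![a₁, 1 / 2] ![b₁, b₂] τ‖ ≤ Real.exp (-(Real.pi * y4 / 8)) * K := by
    calc ‖Theta ![a₁, 1 / 2] ![b₁, b₂] τ‖ ≤ ∑' n, ‖thetaTerm ![a₁, 1 / 2] ![b₁, b₂] τ n‖ :=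
          norm_tsum_le_tsum_norm hsumnorm
      _ ≤ ∑' n : Fin 2 → ℤ, Real.exp (-(Real.pi * y4 / 8)) * (f (n 0) * g (n 1)) :=
          Summable.tsum_le_tsum key hsumnorm hCfg
      _ = Real.exp (-(Real.pi * y4 / 8)) * K := by rw [hKdef, tsum_mul_left]
  refine lt_of_le_of_lt hbound ?_
  -- final numeric estimate
  have hpi : (0 : ℝ) < Real.pi := Real.pi_pos
  have hK1 : (0 : ℝ) < K + 1 := by linarith
  have hlogT : Real.log ((K + 1) / ε) < Real.pi * T / 8 := by
    have h1 : 8 / Real.pi * Real.log ((K + 1) / ε) + 1 ≤ T := le_max_right _ _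
    have h2 : Real.pi / 8 * (8 / Real.pi * Real.log ((K + 1) / ε) + 1) ≤ Real.pi / 8 * T :=
      mul_le_mul_of_nonneg_left h1 (by positivity)
    have h3 : Real.pi / 8 * (8 / Real.pi * Real.log ((K + 1) / ε) + 1)
        = Real.log ((K + 1) / ε) + Real.pi / 8 := by field_simp
    nlinarith
  have hexp : Real.exp (-(Real.pi * y4 / 8)) < ε / (K + 1) := by
    have h1 : Real.exp (-(Real.pi * y4 / 8)) ≤ Real.exp (-(Real.pi * T / 8)) := by
      apply Real.exp_le_exp.mpr
      have := mul_le_mul_of_nonneg_left hT4 hpi.le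
      linarith
    have h2 : Real.exp (-(Real.pi * T / 8)) < ε / (K + 1) := by
      rw [← Real.exp_log (by positivity : (0:ℝ) < ε / (K + 1))]
      apply Real.exp_lt_exp.mpr
      rw [show ε / (K + 1) = ((K + 1) / ε)⁻¹ by field_simp, Real.log_inv]
      linarith
    linarith
  calc Real.exp (-(Real.pi * y4 / 8)) * K ≤ Real.exp (-(Real.pi * y4 / 8)) * (K + 1) := by
        apply mul_le_mul_of_nonneg_left (by linarith) (Real.exp_pos _).le
    _ < ε / (K + 1) * (K + 1) := by
        apply mul_lt_mul_of_pos_right hexp hK1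
    _ = ε := by field_simp
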